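/- If k > 0, n ≤ m, GCH holds below ℵ_ω, and the graph transfer relation [ω_{m+k}, ω_m] ↠ [ω_{n+k}, ω_n] holds, then for all r with n ≤ r ≤ m, the relation [ω_{m+k}, ω_m] ↠ [ω_{r+k}, ω_n] also holds. -/

import Mathlib

open Cardinal

/-- The chromatic number of a graph `(V, Adj)` as a cardinal: the least cardinality of a
type admitting a proper vertex coloring. -/
noncomputable def ChrNum (V : Type) (Adj : V → V → Prop) : Cardinal :=
  sInf {c : Cardinal | ∃ (γ : Type) (f : V → γ), #γ = c ∧ ∀ x y, Adj x y → f x ≠ f y}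

/-- The graph transfer relation `[c, l] ↠ [c', l']`: every graph with exactly `c` vertices
and chromatic number exactly `l` has an (induced) subgraph with exactly `c'` vertices and
chromatic number exactly `l'`. -/
def Transfers (c l c' l' : Cardinal) : Prop :=
  ∀ (V : Type) (Adj : V → V → Prop), Symmetric Adj → (∀ x, ¬ Adj x x) →
    #V = c → ChrNum V Adj = l →
    ∃ S : Set V, #↥S = c' ∧ ChrNum ↥S (fun a b => Adj a.1 b.1) = l'

lemma chrnum_set_nonempty (V : Type) (Adj : V → V → Prop) (hl : ∀ x, ¬ Adj x x) :
    {c : Cardinal | ∃ (γ : Type) (f : V → γ), #γ = c ∧ ∀ x y, Adj x y → f x ≠ f y}.Nonempty :=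
  ⟨#V, V, id, rfl, fun x y hxy hne => hl x (by have hxy2 : x = y := hne; rw [hxy2] at hxy ⊢; exact hxy)⟩

/-- If `k > 0`, `n ≤ m`, GCH holds below `ℵ_ω`, and `[ω_{m+k}, ω_m] ↠ [ω_{n+k}, ω_n]`,
then `[ω_{m+k}, ω_m] ↠ [ω_{r+k}, ω_n]` for all `r` with `n ≤ r ≤ m`. -/
theorem stmt18 (n m k : ℕ) (hk : 0 < k) (hnm : n ≤ m)
    (gch : ∀ j : ℕ, (2 : Cardinal) ^ Cardinal.aleph j = Cardinal.aleph (j + 1))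
    (h : Transfers (Cardinal.aleph (m + k)) (Cardinal.aleph m)
      (Cardinal.aleph (n + k)) (Cardinal.aleph n)) :
    ∀ r : ℕ, n ≤ r → r ≤ m →
      Transfers (Cardinal.aleph (m + k)) (Cardinal.aleph m)
        (Cardinal.aleph (r + k)) (Cardinal.aleph n) := by
  classical
  intro r hnr hrm V Adj hsymm hloop hcard hchr
  -- get the witness subgraph from `h`
  obtain ⟨S, hScard, hSchr⟩ := h V Adj hsymm hloop hcard hchr
  -- get a coloring of V with exactly ℵ_m colors
  have hVne := chrnum_set_nonempty V Adj hloop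
  have hVmem := csInf_mem hVne
  rw [show sInf {c : Cardinal | ∃ (γ : Type) (f : V → γ), #γ = c ∧
      ∀ x y, Adj x y → f x ≠ f y} = ChrNum V Adj from rfl, hchr] at hVmem
  obtain ⟨γ, f, hγ, hfprop⟩ := hVmem
  -- ℵ_{m+k} is regular
  have hmk1 : m + k = (m + (k - 1)) + 1 := by omega
  have hreg : (Cardinal.aleph (m + k)).IsRegular := by
    have h1 : ((m : Ordinal) + k) = Order.succ ((m + (k - 1) : ℕ) : Ordinal) := by
      have h2 : ((m : Ordinal) + k) = ((m + k : ℕ) : Ordinal) := by push_cast; rfl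
      rw [h2, hmk1, ← Ordinal.add_one_eq_succ]
      push_cast
      rfl
    rw [h1]
    exact isRegular_aleph_succ _
  -- some fiber of f has size ≥ ℵ_{r+k}
  have hfiber : ∃ i : γ, Cardinal.aleph (r + k) ≤ #{x : V // f x = i} := by
    by_contra hc
    push_neg at hc
    have hsum : #V = Cardinal.sum fun i : γ => #{x : V // f x = i} := by
      rw [← Cardinal.mk_sigma]
      exact Cardinal.mk_congr (Equiv.sigmaFiberEquiv f).symm
    have hrk_le : Cardinal.aleph (r + k) ≤ Cardinal.aleph (m + k) := by
      rw [Cardinal.aleph_le_aleph]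
      exact_mod_cast (Nat.cast_le (α := Ordinal.{0})).2 (show r + k ≤ m + k by omega)
    have hγlt : #γ < Cardinal.aleph (m + k) := by
      rw [hγ, Cardinal.aleph_lt_aleph]
      exact_mod_cast (Nat.cast_lt (α := Ordinal.{0})).2 (show m < m + k by omega)
    have := Cardinal.sum_lt_of_isRegular hreg hγlt
      (fun i => lt_of_lt_of_le (hc i) hrk_le)
    rw [← hsum, hcard] at this
    exact lt_irrefl _ this
  obtain ⟨i, hi⟩ := hfiber
  -- take a subset of the fiber of size exactly ℵ_{r+k}
  obtain ⟨p, hp⟩ := Cardinal.le_mk_iff_exists_set.1 hi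
  set T : Set V := Subtype.val '' p with hT
  have hTcard : #↥T = Cardinal.aleph (r + k) := by
    rw [hT, Cardinal.mk_image_eq Subtype.val_injective, hp]
  have hTfib : ∀ x ∈ T, f x = i := by
    rintro x ⟨⟨y, hy⟩, _, rfl⟩
    exact hy
  -- the candidate subgraph
  refine ⟨S ∪ T, ?_, ?_⟩
  · -- cardinality
    apply le_antisymm
    · refine (Cardinal.mk_union_le S T).trans ?_
      rw [hScard, hTcard]
      have h2 : Cardinal.aleph (n + k) ≤ Cardinal.aleph (r + k) := by
        rw [Cardinal.aleph_le_aleph]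
        exact_mod_cast (Nat.cast_le (α := Ordinal.{0})).2 (show n + k ≤ r + k by omega)
      rw [Cardinal.add_eq_right (aleph0_le_aleph _) h2]
    · rw [← hTcard]
      exact Cardinal.mk_le_mk_of_subset Set.subset_union_right
  · -- chromatic number
    apply le_antisymm
    · -- upper bound: extend a coloring of S by one new color for T \ S
      have hSne := chrnum_set_nonempty (↥S) (fun a b => Adj a.1 b.1)
        (fun x hx => hloop x.1 hx)
      have hSmem := csInf_mem hSne
      rw [show sInf {c : Cardinal | ∃ (γ₀ : Type) (g : ↥S → γ₀), #γ₀ = c ∧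
          ∀ x y, Adj x.1 y.1 → g x ≠ g y} = ChrNum ↥S (fun a b => Adj a.1 b.1) from rfl,
        hSchr] at hSmem
      obtain ⟨γ₀, g, hγ₀, hgprop⟩ := hSmem
      refine csInf_le' ⟨Option γ₀,
        fun v => if hv : v.1 ∈ S then some (g ⟨v.1, hv⟩) else none, ?_, ?_⟩
      · rw [Cardinal.mk_option, hγ₀, Cardinal.add_one_eq (aleph0_le_aleph _)]
      · intro x y hxy heq
        dsimp only at heq
        by_cases hx : x.1 ∈ S <;> by_cases hy : y.1 ∈ S
        · rw [dif_pos hx, dif_pos hy] at heq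
          exact hgprop ⟨x.1, hx⟩ ⟨y.1, hy⟩ hxy (Option.some_injective _ heq)
        · rw [dif_pos hx, dif_neg hy] at heq
          exact Option.some_ne_none _ heq
        · rw [dif_neg hx, dif_pos hy] at heq
          exact Option.some_ne_none _ heq.symm
        · have hxT : x.1 ∈ T := x.2.resolve_left hx
          have hyT : y.1 ∈ T := y.2.resolve_left hy
          exact hfprop x.1 y.1 hxy (by rw [hTfib _ hxT, hTfib _ hyT])
    · -- lower bound: any coloring of S ∪ T restricts to S
      rw [← hSchr]
      refine le_csInf (chrnum_set_nonempty _ _ (fun x hx => hloop x.1 hx)) ?_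
      rintro b ⟨γ', F, hγ', hFprop⟩
      refine csInf_le' ⟨γ', fun s => F ⟨s.1, Or.inl s.2⟩, hγ', ?_⟩
      intro x y hxy
      exact hFprop ⟨x.1, Or.inl x.2⟩ ⟨y.1, Or.inl y.2⟩ hxy
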